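/- Let d ≥ 3, let m_{i,j} be integers (1 ≤ j ≤ i ≤ d-1), set ε_i := 0 if λ_i = 0 and ε_i := 1 if λ_i < 0, where λ_{d-2} := min{0, m_{d-1,d-1}} and λ_i := min{0, m_{d-1,i+1} + Σ_{k=i+1}^{d-2} λ_k m_{k,i+1}} for i ≤ d-3. For n ∈ {1,…,d-2} and k ≥ 0 define p_{k,n} := Σ over chains n = i_0 < i_1 < ⋯ < i_k < i_{k+1} = d-1 of ∏_{j=1}^{k+1} ε_{i_{j-1}} · m_{i_j, i_{j-1}+1}. Then λ_n = Σ_{k=0}^{d-2-n} p_{k,n} for all n ∈ {1,…,d-2}. -/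

import Mathlib

/-- Sum over chains `n = i₀ < i₁ < ⋯ < i_k < i_{k+1} = d-1` of
`∏_{j=1}^{k+1} ε_{i_{j-1}} · m_{i_j, i_{j-1}+1}`. -/
def pSum (m : ℕ → ℕ → ℤ) (ε : ℕ → ℤ) (d k n : ℕ) : ℤ :=
  ∑ c ∈ Finset.univ.filter
      (fun c : Fin (k + 2) → Fin d =>
        StrictMono c ∧ (c 0 : ℕ) = n ∧ (c (Fin.last (k + 1)) : ℕ) = d - 1),
    ∏ j : Fin (k + 1),
      ε (c j.castSucc : ℕ) * m (c j.succ : ℕ) ((c j.castSucc : ℕ) + 1)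

lemma chain_le {d k : ℕ} {c : Fin (k + 2) → Fin d} (hc : StrictMono c) :
    ∀ j : Fin (k + 2), (c 0 : ℕ) + (j : ℕ) ≤ c j := by
  intro j
  induction j using Fin.induction with
  | zero => simp
  | succ i ih =>
    have h1 : (c i.castSucc : ℕ) < c i.succ := hc (Fin.castSucc_lt_succ : i.castSucc < i.succ)
    have h2 : (i.castSucc : ℕ) = (i : ℕ) := rfl
    have h3 : (i.succ : ℕ) = (i : ℕ) + 1 := rfl
    omega

lemma pSum_eq_zero (m : ℕ → ℕ → ℤ) (ε : ℕ → ℤ) {d k t : ℕ} (h : d - 1 - t ≤ k) :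
    pSum m ε d k t = 0 := by
  unfold pSum
  have he : (Finset.univ.filter
      (fun c : Fin (k + 2) → Fin d =>
        StrictMono c ∧ (c 0 : ℕ) = t ∧ (c (Fin.last (k + 1)) : ℕ) = d - 1)) = ∅ := by
    rw [Finset.filter_eq_empty_iff]
    rintro c - ⟨hc, h0, hl⟩
    have := chain_le hc (Fin.last (k + 1))
    have hlt : (c (Fin.last (k + 1)) : ℕ) < d := (c _).isLt
    simp only [Fin.val_last] at this
    omega
  rw [he, Finset.sum_empty]

lemma pSum_zero (m : ℕ → ℕ → ℤ) (ε : ℕ → ℤ) {d n : ℕ} (hd : 3 ≤ d) (hn : n ≤ d - 2) :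
    pSum m ε d 0 n = ε n * m (d - 1) (n + 1) := by
  have hn' : n < d := by omega
  have hd' : d - 1 < d := by omega
  have hnd : n < d - 1 := by omega
  unfold pSum
  have he : (Finset.univ.filter
      (fun c : Fin (0 + 2) → Fin d =>
        StrictMono c ∧ (c 0 : ℕ) = n ∧ (c (Fin.last (0 + 1)) : ℕ) = d - 1))
      = {![⟨n, hn'⟩, ⟨d - 1, hd'⟩]} := by
    ext c
    simp only [Finset.mem_filter, Finset.mem_univ, true_and, Finset.mem_singleton]
    constructor
    · rintro ⟨hc, h0, h1⟩
      funext j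
      fin_cases j
      · exact Fin.ext (by simpa using h0)
      · exact Fin.ext (by simpa [Fin.last] using h1)
    · rintro rfl
      refine ⟨?_, by simp, by simp [Fin.last]⟩
      rw [Fin.strictMono_iff_lt_succ]
      intro i
      fin_cases i
      simpa [Fin.lt_def] using hnd
  rw [he, Finset.sum_singleton]
  simp [Fin.prod_univ_one]

lemma pSum_succ (m : ℕ → ℕ → ℤ) (ε : ℕ → ℤ) {d k n : ℕ} (hd : 3 ≤ d) (hn : n ≤ d - 2) :
    pSum m ε d (k + 1) n =
      ∑ t ∈ Finset.Icc (n + 1) (d - 2), ε n * m t (n + 1) * pSum m ε d k t := by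
  have hn' : n < d := by omega
  classical
  -- the set of "tails"
  set B : Finset (Fin (k + 2) → Fin d) := Finset.univ.filter
      (fun c' : Fin (k + 2) → Fin d =>
        StrictMono c' ∧ n < (c' 0 : ℕ) ∧ (c' (Fin.last (k + 1)) : ℕ) = d - 1) with hB
  have hmem : ∀ c' ∈ B, (c' 0 : ℕ) ∈ Finset.Icc (n + 1) (d - 2) := by
    intro c' hc'
    rw [hB, Finset.mem_filter] at hc'
    obtain ⟨-, hsm, h0, hl⟩ := hc'
    have hlt : (c' 0 : ℕ) < (c' (Fin.last (k + 1)) : ℕ) := by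
      exact hsm (by simp [Fin.pos_iff_ne_zero, Fin.lt_def, Fin.last])
    rw [Finset.mem_Icc]
    omega
  have step1 : ∑ t ∈ Finset.Icc (n + 1) (d - 2), ε n * m t (n + 1) * pSum m ε d k t
      = ∑ c' ∈ B, ε n * m (c' 0 : ℕ) (n + 1) *
          ∏ j : Fin (k + 1),
            ε (c' j.castSucc : ℕ) * m (c' j.succ : ℕ) ((c' j.castSucc : ℕ) + 1) := by
    rw [← Finset.sum_fiberwise_of_maps_to hmem]
    apply Finset.sum_congr rfl
    intro t ht
    rw [Finset.mem_Icc] at ht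
    unfold pSum
    rw [Finset.mul_sum]
    apply Finset.sum_congr
    · ext c'
      simp only [Finset.mem_filter, Finset.mem_univ, true_and, hB]
      constructor
      · rintro ⟨hsm, h0, hl⟩
        exact ⟨⟨hsm, by omega, hl⟩, h0⟩
      · rintro ⟨⟨hsm, -, hl⟩, h0⟩
        exact ⟨hsm, h0, hl⟩
    · intro c' hc'
      simp only [Finset.mem_filter] at hc'
      rw [hc'.2]
  rw [step1]
  unfold pSum
  apply Finset.sum_nbij' (i := fun c => c ∘ Fin.succ) (j := fun c' => Fin.cons ⟨n, hn'⟩ c')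
  · -- maps to
    rintro c hc
    rw [Finset.mem_filter] at hc
    obtain ⟨-, hsm, h0, hl⟩ := hc
    rw [hB, Finset.mem_filter]
    refine ⟨Finset.mem_univ _, hsm.comp (Fin.strictMono_succ), ?_, ?_⟩
    · have : (c 0 : ℕ) < c ((0 : Fin (k + 2)).succ) := hsm (by simp [Fin.lt_def])
      simpa [h0] using this
    · show (c ((Fin.last (k + 1)).succ) : ℕ) = d - 1
      rw [Fin.succ_last]
      exact hl
  · rintro c' hc'
    rw [hB, Finset.mem_filter] at hc'
    obtain ⟨-, hsm, h0, hl⟩ := hc'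
    rw [Finset.mem_filter]
    refine ⟨Finset.mem_univ _, ?_, by simp, ?_⟩
    · rw [Fin.strictMono_iff_lt_succ]
      intro i
      induction i using Fin.cases with
      | zero =>
        simp only [Fin.castSucc_zero, Fin.cons_zero, Fin.cons_succ, Fin.lt_def]
        exact h0
      | succ i =>
        have e1 : (i.succ).castSucc = (i.castSucc).succ := by
          simp [Fin.ext_iff]
        rw [e1]
        simp only [Fin.cons_succ]
        exact hsm (Fin.castSucc_lt_succ : i.castSucc < i.succ)
    · have e2 : Fin.last (k + 1 + 1) = (Fin.last (k + 1)).succ := (Fin.succ_last _).symm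
      rw [e2, Fin.cons_succ]
      exact hl
  · -- left inverse
    intro c hc
    rw [Finset.mem_filter] at hc
    obtain ⟨-, hsm, h0, hl⟩ := hc
    have : (⟨n, hn'⟩ : Fin d) = c 0 := Fin.ext (by simp [h0])
    rw [this]
    exact Fin.cons_self_tail c
  · intro c' _
    funext i
    simp [Fin.cons_succ]
  · -- products agree
    intro c hc
    rw [Finset.mem_filter] at hc
    obtain ⟨-, hsm, h0, hl⟩ := hc
    rw [Fin.prod_univ_succ]
    congr 1
    · show ε (c 0 : ℕ) * m (c ((0 : Fin (k + 2)).succ) : ℕ) ((c 0 : ℕ) + 1)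
        = ε n * m ((c ∘ Fin.succ) 0 : ℕ) (n + 1)
      rw [h0]
      rfl

theorem stmt4 (d : ℕ) (hd : 3 ≤ d) (m : ℕ → ℕ → ℤ)
    (lam : ℕ → ℤ)
    (hlamtop : lam (d - 2) = min 0 (m (d - 1) (d - 1)))
    (hlam : ∀ i, 1 ≤ i → i ≤ d - 3 →
      lam i = min 0 (m (d - 1) (i + 1) + ∑ k ∈ Finset.Icc (i + 1) (d - 2), lam k * m k (i + 1)))
    (ε : ℕ → ℤ)
    (hε : ∀ i, (lam i = 0 → ε i = 0) ∧ (lam i < 0 → ε i = 1))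
    (n : ℕ) (hn1 : 1 ≤ n) (hn : n ≤ d - 2) :
    lam n = ∑ k ∈ Finset.range (d - 1 - n), pSum m ε d k n := by
  classical
  -- λ_i = ε_i · (...)
  have lam_eq : ∀ i, 1 ≤ i → i ≤ d - 2 →
      lam i = ε i * (m (d - 1) (i + 1) +
        ∑ k ∈ Finset.Icc (i + 1) (d - 2), lam k * m k (i + 1)) := by
    intro i h1 h2
    have hmin : lam i = min 0 (m (d - 1) (i + 1) +
        ∑ k ∈ Finset.Icc (i + 1) (d - 2), lam k * m k (i + 1)) := by
      rcases eq_or_lt_of_le h2 with heq | hlt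
      · have hempty : Finset.Icc (i + 1) (d - 2) = ∅ := Finset.Icc_eq_empty (by omega)
        rw [hempty, Finset.sum_empty, add_zero, heq]
        have h21 : d - 2 + 1 = d - 1 := by omega
        rw [h21]
        exact hlamtop
      · exact hlam i h1 (by omega)
    set X := m (d - 1) (i + 1) + ∑ k ∈ Finset.Icc (i + 1) (d - 2), lam k * m k (i + 1) with hX
    have hle : lam i ≤ 0 := by rw [hmin]; exact min_le_left _ _
    rcases lt_or_eq_of_le hle with hneg | hzero
    · have hXneg : X ≤ 0 := by
        by_contra hcon
        push_neg at hcon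
        rw [hmin, min_eq_left hcon.le] at hneg
        exact lt_irrefl 0 hneg
      rw [(hε i).2 hneg, one_mul, hmin, min_eq_right hXneg]
    · rw [hzero, (hε i).1 hzero, zero_mul]
  -- recursion for Q
  have Qrec : ∀ i, 1 ≤ i → i ≤ d - 2 →
      ∑ k ∈ Finset.range (d - 1 - i), pSum m ε d k i
      = ε i * m (d - 1) (i + 1)
        + ∑ t ∈ Finset.Icc (i + 1) (d - 2), ε i * m t (i + 1) *
            ∑ k ∈ Finset.range (d - 1 - t), pSum m ε d k t := by
    intro i h1 h2
    have hr : d - 1 - i = (d - 2 - i) + 1 := by omega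
    rw [hr, Finset.sum_range_succ', pSum_zero m ε hd h2, add_comm]
    congr 1
    have hcongr : ∀ k ∈ Finset.range (d - 2 - i), pSum m ε d (k + 1) i
        = ∑ t ∈ Finset.Icc (i + 1) (d - 2), ε i * m t (i + 1) * pSum m ε d k t :=
      fun k _ => pSum_succ m ε hd h2
    rw [Finset.sum_congr rfl hcongr, Finset.sum_comm]
    apply Finset.sum_congr rfl
    intro t ht
    rw [Finset.mem_Icc] at ht
    rw [← Finset.mul_sum]
    congr 1
    symm
    apply Finset.sum_subset
    · apply Finset.range_subset_range.2; omega
    · intro k _ hk2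
      rw [Finset.mem_range, not_lt] at hk2
      exact pSum_eq_zero m ε hk2
  have main : ∀ j : ℕ, ∀ i, 1 ≤ i → i ≤ d - 2 → d - 2 - i ≤ j →
      lam i = ∑ k ∈ Finset.range (d - 1 - i), pSum m ε d k i := by
    intro j
    induction j with
    | zero =>
      intro i h1 h2 h3
      have hi : i = d - 2 := by omega
      rw [Qrec i h1 h2, lam_eq i h1 h2]
      have hempty : Finset.Icc (i + 1) (d - 2) = ∅ := Finset.Icc_eq_empty (by omega)
      rw [hempty]
      simp
    | succ j ih =>
      intro i h1 h2 h3
      rw [Qrec i h1 h2, lam_eq i h1 h2, mul_add, Finset.mul_sum]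
      congr 1
      apply Finset.sum_congr rfl
      intro t ht
      rw [Finset.mem_Icc] at ht
      rw [ih t (by omega) (by omega) (by omega)]
      ring
  exact main (d - 2 - n) n hn1 hn le_rfl
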